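/- For all real v > 1 and γ > 1, F_n(v,γ) = γ·v^{γ+2} - v^{2γ+1} - γ·v^{γ} + v is strictly negative. -/

import Mathlib

open Real Set

private lemma phi_pos (γ : ℝ) (hγ : 1 < γ) :
    ∀ x : ℝ, 1 < x → 0 < 2 * x ^ (γ + 1) - (γ + 1) * x ^ (2:ℝ) + (γ - 1) := by
  set φ : ℝ → ℝ := fun x => 2 * x ^ (γ + 1) - (γ + 1) * x ^ (2:ℝ) + (γ - 1) with hφdef
  have hderiv : ∀ x : ℝ, 0 < x → HasDerivAt φ (2 * (γ + 1) * (x ^ γ - x)) x := by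
    intro x hx
    have h1 : HasDerivAt (fun y : ℝ => y ^ (γ + 1)) ((γ + 1) * x ^ (γ + 1 - 1)) x :=
      Real.hasDerivAt_rpow_const (Or.inl hx.ne')
    have h2 : HasDerivAt (fun y : ℝ => y ^ (2:ℝ)) (2 * x ^ ((2:ℝ) - 1)) x :=
      Real.hasDerivAt_rpow_const (Or.inl hx.ne')
    have e1 : γ + 1 - 1 = γ := by ring
    have e2 : (2:ℝ) - 1 = 1 := by norm_num
    rw [e1] at h1
    rw [e2, Real.rpow_one] at h2
    have := ((h1.const_mul 2).sub (h2.const_mul (γ + 1))).add_const (γ - 1)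
    refine this.congr_deriv ?_
    ring
  have hmono : StrictMonoOn φ (Ici 1) := by
    apply strictMonoOn_of_deriv_pos (convex_Ici 1)
    · intro x hx
      exact ((hderiv x (lt_of_lt_of_le one_pos hx)).continuousAt).continuousWithinAt
    · intro x hx
      rw [interior_Ici] at hx
      have hx1 : (1:ℝ) < x := hx
      have hx0 : (0:ℝ) < x := by linarith
      rw [(hderiv x hx0).deriv]
      have : x ^ (1:ℝ) < x ^ γ := Real.rpow_lt_rpow_of_exponent_lt hx1 hγ
      rw [Real.rpow_one] at this
      nlinarith
  intro x hx
  have h0 : φ 1 = 0 := by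
    simp [hφdef, Real.one_rpow]
    ring
  have := hmono (self_mem_Ici) (le_of_lt hx : (1:ℝ) ≤ x) hx
  rw [h0] at this
  exact this

private lemma f_pos (γ : ℝ) (hγ : 1 < γ) :
    ∀ x : ℝ, 1 < x → 0 < x ^ (2 * γ) - γ * x ^ (γ + 1) + γ * x ^ (γ - 1) - 1 := by
  set f : ℝ → ℝ := fun x => x ^ (2 * γ) - γ * x ^ (γ + 1) + γ * x ^ (γ - 1) - 1 with hfdef
  have hderiv : ∀ x : ℝ, 0 < x →
      HasDerivAt f (2 * γ * x ^ (2 * γ - 1) - γ * (γ + 1) * x ^ γ + γ * (γ - 1) * x ^ (γ - 2)) x := by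
    intro x hx
    have h1 : HasDerivAt (fun y : ℝ => y ^ (2 * γ)) (2 * γ * x ^ (2 * γ - 1)) x :=
      Real.hasDerivAt_rpow_const (Or.inl hx.ne')
    have h2 : HasDerivAt (fun y : ℝ => y ^ (γ + 1)) ((γ + 1) * x ^ (γ + 1 - 1)) x :=
      Real.hasDerivAt_rpow_const (Or.inl hx.ne')
    have h3 : HasDerivAt (fun y : ℝ => y ^ (γ - 1)) ((γ - 1) * x ^ (γ - 1 - 1)) x :=
      Real.hasDerivAt_rpow_const (Or.inl hx.ne')
    have e2 : γ + 1 - 1 = γ := by ring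
    have e3 : γ - 1 - 1 = γ - 2 := by ring
    rw [e2] at h2; rw [e3] at h3
    have := ((h1.sub (h2.const_mul γ)).add (h3.const_mul γ)).sub_const 1
    refine this.congr_deriv ?_
    ring
  have hmono : StrictMonoOn f (Ici 1) := by
    apply strictMonoOn_of_deriv_pos (convex_Ici 1)
    · intro x hx
      exact ((hderiv x (lt_of_lt_of_le one_pos hx)).continuousAt).continuousWithinAt
    · intro x hx
      rw [interior_Ici] at hx
      have hx1 : (1:ℝ) < x := hx
      have hx0 : (0:ℝ) < x := by linarith
      rw [(hderiv x hx0).deriv]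
      have hφ := phi_pos γ hγ x hx1
      have hp : (0:ℝ) < x ^ (γ - 2) := Real.rpow_pos_of_pos hx0 _
      have r1 : x ^ (2 * γ - 1) = x ^ (γ - 2) * x ^ (γ + 1) := by
        rw [← Real.rpow_add hx0]; ring_nf
      have r2 : x ^ γ = x ^ (γ - 2) * x ^ (2:ℝ) := by
        rw [← Real.rpow_add hx0]; ring_nf
      rw [r1, r2]
      have : 2 * γ * (x ^ (γ - 2) * x ^ (γ + 1)) - γ * (γ + 1) * (x ^ (γ - 2) * x ^ (2:ℝ))
          + γ * (γ - 1) * x ^ (γ - 2)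
          = γ * (x ^ (γ - 2) * (2 * x ^ (γ + 1) - (γ + 1) * x ^ (2:ℝ) + (γ - 1))) := by ring
      rw [this]
      positivity
  intro x hx
  have h0 : f 1 = 0 := by
    simp [hfdef, Real.one_rpow]
  have := hmono (self_mem_Ici) (le_of_lt hx : (1:ℝ) ≤ x) hx
  rw [h0] at this
  exact this

theorem Fn_neg (v γ : ℝ) (hv : 1 < v) (hγ : 1 < γ) :
    γ * v ^ (γ + 2) - v ^ (2 * γ + 1) - γ * v ^ γ + v < 0 := by
  have hv0 : (0:ℝ) < v := by linarith
  have hf := f_pos γ hγ v hv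
  have r1 : v ^ (γ + 2) = v ^ (γ + 1) * v := by
    rw [show γ + 2 = (γ + 1) + 1 by ring, Real.rpow_add hv0, Real.rpow_one]
  have r2 : v ^ (2 * γ + 1) = v ^ (2 * γ) * v := by
    rw [Real.rpow_add hv0, Real.rpow_one]
  have r3 : v ^ γ = v ^ (γ - 1) * v ^ (1:ℝ) := by
    rw [← Real.rpow_add hv0]; norm_num
  rw [Real.rpow_one] at r3
  rw [r1, r2, r3]
  nlinarith [mul_pos hf hv0]
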